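/- If E(β₁,β₂) ≠ 0, then there exists n' such that for all n ≥ n', the determinant n(F_n)·n(F_{n+1}) of the diagonal matrix diag(n(F_n), n(F_{n+1})) is strictly positive; i.e., n(F_n) and n(F_{n+1}) have the same sign. -/

import Mathlib

noncomputable def goldenα : ℝ := (1 + Real.sqrt 5) / 2

noncomputable def Efun (β₁ β₂ : ℝ) : ℝ :=
  (1 / 5) * (1 + β₁ + 2 * β₂ + 5 * β₁ * β₂ + goldenα * (β₁ + 3 * β₂ + 8 * β₁ * β₂))

noncomputable def nrm (β₁ β₂ : ℝ) (n : ℕ) : ℝ :=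
  (Nat.fib n : ℝ) ^ 2 + β₁ * (Nat.fib (n + 1) : ℝ) ^ 2
    + β₂ * (Nat.fib (n + 2) : ℝ) ^ 2 + β₁ * β₂ * (Nat.fib (n + 3) : ℝ) ^ 2

open goldenRatio in
lemma nrm_eq_aux (β₁ β₂ : ℝ) (n : ℕ) :
    nrm β₁ β₂ n = Efun β₁ β₂ * goldenα ^ (2 * n)
      + ((-1 : ℝ) ^ n * (-2 / 5) * (1 - β₁ + β₂ - β₁ * β₂)
         + Real.goldenConj ^ (2 * n)
           * (1 + β₁ * Real.goldenConj ^ 2 + β₂ * Real.goldenConj ^ 4 + β₁ * β₂ * Real.goldenConj ^ 6) / 5) := by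
  have hr : Real.sqrt 5 ^ 2 = 5 := Real.sq_sqrt (by norm_num)
  set r := Real.sqrt 5 with hrdef
  set a := Real.goldenRatio ^ n with ha
  set b := Real.goldenConj ^ n with hbdef
  set X := (Nat.fib n : ℝ) with hX
  set Y := (Nat.fib (n + 1) : ℝ) with hY
  have hab : a * b = (-1 : ℝ) ^ n := by rw [ha, hbdef, ← mul_pow, Real.goldenRatio_mul_goldenConj]
  have h5 : r ≠ 0 := by rw [hrdef]; positivity
  have e : ∀ A : ℝ, A / r * (2 * r) = 2 * A := by
    intro A; field_simp
  have hx : X * r = a - b := by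
    rw [hX, Real.coe_fib_eq]
    exact div_mul_cancel₀ _ h5
  have hy : Y * (2 * r) = a * (1 + r) - b * (1 - r) := by
    rw [hY, Real.coe_fib_eq, pow_succ, pow_succ, e]
    show 2 * (a * ((1 + r) / 2) - b * ((1 - r) / 2)) = a * (1 + r) - b * (1 - r)
    ring
  have hx2 : X ^ 2 * 5 = (a - b) ^ 2 := by
    linear_combination (X * r + (a - b)) * hx - X ^ 2 * hr
  have hy2 : Y ^ 2 * 20 = (a * (1 + r) - b * (1 - r)) ^ 2 := by
    linear_combination (Y * (2 * r) + (a * (1 + r) - b * (1 - r))) * hy - 4 * Y ^ 2 * hr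
  have hxy : X * Y * 10 = (a - b) * (a * (1 + r) - b * (1 - r)) := by
    linear_combination (Y * 2 * r) * hx + (a - b) * hy - 2 * X * Y * hr
  have hf2 : (Nat.fib (n + 2) : ℝ) = X + Y := by
    rw [hX, hY, Nat.fib_add_two]; push_cast; ring
  have hf3 : (Nat.fib (n + 3) : ℝ) = X + 2 * Y := by
    have : n + 3 = (n + 1) + 2 := by ring
    rw [this, Nat.fib_add_two, Nat.fib_add_two]
    rw [hX, hY]; push_cast; ring
  have h2a : goldenα ^ (2 * n) = a ^ 2 := by
    show Real.goldenRatio ^ (2 * n) = a ^ 2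
    rw [ha, ← pow_mul, mul_comm]
  have h2b : Real.goldenConj ^ (2 * n) = b ^ 2 := by rw [hbdef, ← pow_mul, mul_comm]
  rw [nrm, hf2, hf3, h2a, h2b, Efun]
  show X ^ 2 + β₁ * Y ^ 2 + β₂ * (X + Y) ^ 2 + β₁ * β₂ * (X + 2 * Y) ^ 2 =
    (1 / 5) * (1 + β₁ + 2 * β₂ + 5 * β₁ * β₂ + (1 + r) / 2 * (β₁ + 3 * β₂ + 8 * β₁ * β₂)) * a ^ 2
      + ((-1 : ℝ) ^ n * (-2 / 5) * (1 - β₁ + β₂ - β₁ * β₂)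
         + b ^ 2 * (1 + β₁ * ((1 - r) / 2) ^ 2 + β₂ * ((1 - r) / 2) ^ 4
             + β₁ * β₂ * ((1 - r) / 2) ^ 6) / 5)
  linear_combination ((1 + β₂ + β₁ * β₂) / 5) * hx2 + ((β₁ + β₂ + 4 * β₁ * β₂) / 20) * hy2
    + ((2 * β₂ + 4 * β₁ * β₂) / 10) * hxy
    + ((1 / 20) * (-7/4 * b^2 * β₂ - 51/16 * b^2 * β₁ * β₂ + b^2 * r * β₂
        + 25/8 * b^2 * r * β₁ * β₂ - 1/4 * b^2 * r^2 * β₂ - 5/4 * b^2 * r^2 * β₁ * β₂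
        + 3/8 * b^2 * r^3 * β₁ * β₂ - 1/16 * b^2 * r^4 * β₁ * β₂
        + 2 * a * b * β₂ + 2 * a * b * β₁ + 8 * a * b * β₁ * β₂
        + a^2 * β₂ + a^2 * β₁ + 4 * a^2 * β₁ * β₂)) * hr
    + ((2 / 5) * (-1 - β₂ + β₁ + β₁ * β₂)) * hab

theorem det_fib_norms_pos (β₁ β₂ : ℝ) (hE : Efun β₁ β₂ ≠ 0) :
    ∃ n' : ℕ, ∀ n ≥ n', nrm β₁ β₂ n * nrm β₁ β₂ (n + 1) > 0 := by
  have hr2 : Real.sqrt 5 ^ 2 = 5 := Real.sq_sqrt (by norm_num)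
  have hr0 : 0 ≤ Real.sqrt 5 := Real.sqrt_nonneg 5
  have hr3 : Real.sqrt 5 < 3 := by nlinarith
  have hr1 : 2 < Real.sqrt 5 := by nlinarith
  set E := Efun β₁ β₂ with hEdef
  set C : ℝ := (2 / 5) * |1 - β₁ + β₂ - β₁ * β₂|
      + |1 + β₁ * Real.goldenConj ^ 2 + β₂ * Real.goldenConj ^ 4 + β₁ * β₂ * Real.goldenConj ^ 6| / 5 with hCdef
  have hC : 0 ≤ C := by positivity
  have hψ : |Real.goldenConj| ≤ 1 := by
    rw [abs_le]
    refine ⟨?_, ?_⟩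
    · show (-1 : ℝ) ≤ (1 - Real.sqrt 5) / 2
      linarith
    · show (1 - Real.sqrt 5) / 2 ≤ (1 : ℝ)
      linarith
  have hφ : (1 : ℝ) < goldenα := by
    show (1 : ℝ) < (1 + Real.sqrt 5) / 2
    linarith
  have hs : ∀ n, |nrm β₁ β₂ n - E * goldenα ^ (2 * n)| ≤ C := by
    intro n
    have h := nrm_eq_aux β₁ β₂ n
    have heq : nrm β₁ β₂ n - E * goldenα ^ (2 * n)
        = (-1 : ℝ) ^ n * (-2 / 5) * (1 - β₁ + β₂ - β₁ * β₂)
          + Real.goldenConj ^ (2 * n)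
            * (1 + β₁ * Real.goldenConj ^ 2 + β₂ * Real.goldenConj ^ 4 + β₁ * β₂ * Real.goldenConj ^ 6) / 5 := by
      rw [h]; ring
    rw [heq, hCdef]
    refine le_trans (abs_add_le _ _) (add_le_add ?_ ?_)
    · rw [abs_mul, abs_mul, abs_pow, abs_neg, abs_one, one_pow, one_mul]
      have : |(-2 : ℝ) / 5| = 2 / 5 := by norm_num
      rw [this]
    · rw [abs_div, abs_mul, abs_pow]
      have h1 : |Real.goldenConj| ^ (2 * n) ≤ 1 := pow_le_one₀ (abs_nonneg _) hψ
      have h2 : (0 : ℝ) ≤ |1 + β₁ * Real.goldenConj ^ 2 + β₂ * Real.goldenConj ^ 4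
          + β₁ * β₂ * Real.goldenConj ^ 6| := abs_nonneg _
      have : |(5 : ℝ)| = 5 := by norm_num
      rw [this]
      nlinarith
  have hEabs : 0 < |E| := abs_pos.mpr hE
  obtain ⟨N, hN⟩ : ∃ N : ℕ, C / |E| < goldenα ^ N := pow_unbounded_of_one_lt _ hφ
  have hCE : C < |E| * goldenα ^ N := by
    rw [div_lt_iff₀ hEabs] at hN
    nlinarith
  have key : ∀ m, N ≤ m → 0 < E * nrm β₁ β₂ m := by
    intro m hm
    have hmono : goldenα ^ N ≤ goldenα ^ (2 * m) :=
      pow_le_pow_right₀ (le_of_lt hφ) (by omega)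
    have hd := abs_le.mp (hs m)
    have hpowpos : (0 : ℝ) < goldenα ^ (2 * m) := pow_pos (by linarith) _
    have hCE2 : C < |E| * goldenα ^ (2 * m) := by nlinarith
    rcases lt_or_gt_of_ne hE with hneg | hpos
    · have hEa : |E| = -E := abs_of_neg hneg
      rw [hEa] at hCE2
      have : E * goldenα ^ (2 * m) + (nrm β₁ β₂ m - E * goldenα ^ (2 * m)) < 0 := by
        nlinarith [hd.2]
      have hn0 : nrm β₁ β₂ m < 0 := by nlinarith
      exact mul_pos_of_neg_of_neg hneg hn0
    · have hEa : |E| = E := abs_of_pos hpos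
      rw [hEa] at hCE2
      have hn0 : 0 < nrm β₁ β₂ m := by nlinarith [hd.1]
      exact mul_pos hpos hn0
  refine ⟨N, fun n hn => ?_⟩
  have h1 := key n hn
  have h2 := key (n + 1) (by omega)
  have hE2 : (0 : ℝ) < E ^ 2 := by positivity
  nlinarith [mul_pos h1 h2]
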